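/- If N is a median subalgebra of M and X ⊆ N, then the convex hull of X computed in N equals N intersected with the convex hull of X computed in M. -/

import Mathlib

/-- A median algebra: a set with a ternary median operation satisfying (Med 1)-(Med 3). -/
structure MedianAlgebra (M : Type*) where
  m : M → M → M → M
  comm₁ : ∀ x y z, m x y z = m x z y
  comm₂ : ∀ x y z, m x y z = m y z x
  idem : ∀ x y, m x x y = x
  assoc : ∀ x y z u v, m (m x y z) u v = m x (m y u v) (m z u v)

namespace MedianAlgebra

variable {M : Type*}

/-- The interval `[x,y] = {z | z = m x y z}`. -/
def I (A : MedianAlgebra M) (x y : M) : Set M := {z | z = A.m x y z}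

/-- A subset is convex if it contains the interval between any two of its points. -/
def Conv (A : MedianAlgebra M) (C : Set M) : Prop :=
  ∀ x ∈ C, ∀ y ∈ C, A.I x y ⊆ C

/-- A half space is a convex set with convex complement. -/
def Halfspace (A : MedianAlgebra M) (H : Set M) : Prop :=
  A.Conv H ∧ A.Conv Hᶜ

/-- The convex hull of a set: the intersection of all convex sets containing it. -/
def hull (A : MedianAlgebra M) (X : Set M) : Set M :=
  ⋂₀ {C | A.Conv C ∧ X ⊆ C}

/-- The separator `Δ(X,Y)`: half spaces containing `X` and disjoint from `Y`. -/
def sep (A : MedianAlgebra M) (X Y : Set M) : Set (Set M) :=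
  {H | A.Halfspace H ∧ X ⊆ H ∧ Y ⊆ Hᶜ}

end MedianAlgebra

/-- A subset of `N` that is convex relative to the subalgebra `N`. -/
def MedianAlgebra.ConvIn {M : Type*} (A : MedianAlgebra M) (N C : Set M) : Prop :=
  C ⊆ N ∧ ∀ x ∈ C, ∀ y ∈ C, N ∩ A.I x y ⊆ C

/-- The convex hull of `X` computed inside the subalgebra `N`. -/
def MedianAlgebra.hullIn {M : Type*} (A : MedianAlgebra M) (N X : Set M) : Set M :=
  ⋂₀ {C | A.ConvIn N C ∧ X ⊆ C}

namespace MedianAlgebra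

variable {M : Type*} (A : MedianAlgebra M)


lemma m213 (x y z : M) : A.m x y z = A.m y x z := by rw [A.comm₂, A.comm₁]
lemma m312 (x y z : M) : A.m x y z = A.m z x y := by rw [A.comm₂, A.comm₂]
lemma m321 (x y z : M) : A.m x y z = A.m z y x := by rw [A.m312, A.comm₁]
lemma mxyx (x y : M) : A.m x y x = x := by rw [A.comm₁, A.idem]
lemma mxyy (x y : M) : A.m x y y = y := by rw [A.m213, A.mxyx]

lemma absorb (x y z : M) : A.m x y (A.m x y z) = A.m x y z := by
  have h : A.m (A.m z x y) x y = A.m z x y := by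
    rw [A.assoc, A.idem, A.mxyx]
  calc A.m x y (A.m x y z) = A.m (A.m x y z) x y := A.m312 _ _ _
    _ = A.m (A.m z x y) x y := by rw [A.m312 x y z]
    _ = A.m z x y := h
    _ = A.m x y z := (A.m312 x y z).symm

/-- Uniqueness of the median: a point in all three intervals is the median. -/
lemma med_eq (a b c s : M) (h1 : s = A.m a b s) (h2 : s = A.m a c s)
    (h3 : s = A.m b c s) : A.m a b c = s := by
  have k1 : A.m (A.m a b c) c s = s := by
    rw [A.assoc, ← h3, A.idem, A.comm₁, ← h2]
  have k2 : A.m (A.m a b c) b s = s := by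
    rw [A.comm₁ a b c, A.assoc, A.m213 c b s, ← h3, A.idem, A.comm₁, ← h1]
  calc A.m a b c = A.m (A.m a b c) (A.m a b c) s := (A.idem _ s).symm
    _ = A.m a (A.m b (A.m a b c) s) (A.m c (A.m a b c) s) := A.assoc _ _ _ _ _
    _ = s := by rw [A.m213 b (A.m a b c) s, k2, A.m213 c (A.m a b c) s, k1, A.mxyy]

/-- Interval calculus: if `w ∈ [u,v]` and `g ∈ [u,w]` then `w ∈ [g,v]`. -/
lemma conv_aux (u v w g : M) (h1 : w = A.m u v w) (h2 : g = A.m u w g) :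
    w = A.m g v w := by
  obtain ⟨s, hs⟩ : ∃ s, s = A.m g v w := ⟨_, rfl⟩
  have hs2 : s = A.m v w g := by rw [hs]; exact A.comm₂ _ _ _
  have s2 : s = A.m v w s := by
    conv_rhs => rw [hs2]
    rw [A.absorb, ← hs2]
  have s1 : s = A.m u w s :=
    calc s = A.m g v w := hs
      _ = A.m (A.m u w g) v w := by rw [← h2]
      _ = A.m u (A.m w v w) (A.m g v w) := A.assoc _ _ _ _ _
      _ = A.m u w (A.m g v w) := by rw [A.mxyx]
      _ = A.m u w s := by rw [← hs]
  have s3 : s = A.m u v s :=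
    calc s = A.m v w s := s2
      _ = A.m (A.m u v w) v s := by rw [← h1]; exact A.m213 v w s
      _ = A.m u (A.m v v s) (A.m w v s) := A.assoc _ _ _ _ _
      _ = A.m u v (A.m w v s) := by rw [A.idem]
      _ = A.m u v (A.m v w s) := by rw [A.m213 w v s]
      _ = A.m u v s := by rw [← s2]
  calc w = A.m u v w := h1
    _ = s := A.med_eq u v w s s3 s1 s2
    _ = A.m g v w := hs

/-- Interval calculus: if `v ∈ [y,p]` and `g ∈ [p,v]` then `v ∈ [y,g]`. -/
lemma append_aux (y v p g : M) (h1 : v = A.m y v p) (h2 : g = A.m p v g) :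
    v = A.m y v g := by
  obtain ⟨s, hs⟩ : ∃ s, s = A.m y v g := ⟨_, rfl⟩
  have s2 : s = A.m y v s := by
    conv_rhs => rw [hs]
    rw [A.absorb, ← hs]
  have s1 : s = A.m p v s :=
    calc s = A.m y v g := hs
      _ = A.m (A.m p v g) y v := by rw [← h2]; exact A.m312 y v g
      _ = A.m p (A.m v y v) (A.m g y v) := A.assoc _ _ _ _ _
      _ = A.m p v (A.m g y v) := by rw [A.mxyx]
      _ = A.m p v (A.m y v g) := by rw [A.m312 y v g]
      _ = A.m p v s := by rw [← hs]
  have s3 : s = A.m y p s :=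
    calc s = A.m p v s := s1
      _ = A.m (A.m y v p) p s := by rw [← h1]; exact A.m213 p v s
      _ = A.m y (A.m v p s) (A.m p p s) := A.assoc _ _ _ _ _
      _ = A.m y (A.m v p s) p := by rw [A.idem]
      _ = A.m y (A.m p v s) p := by rw [A.m213 v p s]
      _ = A.m y s p := by rw [← s1]
      _ = A.m y p s := A.comm₁ _ _ _
  have hm : A.m y p v = s := A.med_eq y p v s s3 s2 s1
  calc v = A.m y v p := h1
    _ = A.m y p v := A.comm₁ _ _ _
    _ = s := hm
    _ = A.m y v g := hs


lemma gate_shift (q w p x : M) (h : p = A.m q w p) : A.m q (A.m x w p) p = p :=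
  calc A.m q (A.m x w p) p = A.m (A.m x w p) q p := A.m213 _ _ _
    _ = A.m x (A.m w q p) (A.m p q p) := A.assoc _ _ _ _ _
    _ = A.m x (A.m q w p) (A.m p q p) := by rw [A.m213 w q p]
    _ = A.m x p p := by rw [← h, A.mxyx]
    _ = p := A.mxyy _ _

lemma absorb2 (x w t : M) : A.m x (A.m x w t) t = A.m x w t :=
  calc A.m x (A.m x w t) t = A.m x t (A.m x w t) := A.comm₁ _ _ _
    _ = A.m x t (A.m x t w) := by rw [A.comm₁ x w t]
    _ = A.m x t w := A.absorb _ _ _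
    _ = A.m x w t := A.comm₁ _ _ _

/-- A gate map: `γ w` is a point of the fixed set `S = {w | γ w = w}` lying in
every interval `[h, w]` with `h ∈ S`. -/
def IsGate (γ : M → M) : Prop :=
  (∀ w, γ (γ w) = γ w) ∧ ∀ w h, γ h = h → γ w = A.m h w (γ w)

lemma isGate_step (x : M) (γ : M → M) (hγ : A.IsGate γ) :
    A.IsGate (fun w => A.m x w (γ w)) := by
  obtain ⟨hfix, hrel⟩ := hγ
  have key1 : ∀ w, γ (A.m x w (γ w)) = γ w := by
    intro w
    obtain ⟨p, hp⟩ : ∃ p, p = γ w := ⟨_, rfl⟩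
    obtain ⟨q, hq⟩ : ∃ q, q = γ (A.m x w p) := ⟨_, rfl⟩
    have hqfix : γ q = q := by rw [hq, hfix]
    have hpfix : γ p = p := by rw [hp, hfix]
    have h2 : q = A.m p (A.m x w p) q := by rw [hq]; exact hrel _ p hpfix
    have h3 : p = A.m q w p := by rw [hp]; exact hrel w q hqfix
    have h4 : A.m q (A.m x w p) p = p := A.gate_shift q w p x h3
    have hqp : q = p := by rw [h2, A.m321, h4]
    rw [← hp, ← hq]
    exact hqp
  constructor
  · intro w
    show A.m x (A.m x w (γ w)) (γ (A.m x w (γ w))) = A.m x w (γ w)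
    rw [key1 w]
    exact A.absorb2 _ _ _
  · intro w h' hh'
    obtain ⟨p, hp⟩ : ∃ p, p = γ w := ⟨_, rfl⟩
    obtain ⟨q, hq⟩ : ∃ q, q = γ h' := ⟨_, rfl⟩
    have hh'2 : A.m x h' (γ h') = h' := hh'
    have hα : h' = A.m x h' q := by rw [hq]; exact hh'2.symm
    have hqfix : γ q = q := by rw [hq, hfix]
    have hβ : p = A.m q w p := by rw [hp]; exact hrel w q hqfix
    obtain ⟨r, hr⟩ : ∃ r, r = A.m p w h' := ⟨_, rfl⟩
    have hrabs : A.m p w r = r := by rw [hr]; exact A.absorb _ _ _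
    have rx : r = A.m x r p :=
      calc r = A.m p w h' := hr
        _ = A.m h' w p := A.m321 _ _ _
        _ = A.m (A.m x h' q) w p := by rw [← hα]
        _ = A.m x (A.m h' w p) (A.m q w p) := A.assoc _ _ _ _ _
        _ = A.m x (A.m p w h') (A.m q w p) := by rw [A.m321 h' w p]
        _ = A.m x r p := by rw [← hr, ← hβ]
    obtain ⟨L, hL⟩ : ∃ L, L = A.m x w r := ⟨_, rfl⟩
    have LA : A.m x w L = L := by rw [hL]; exact A.absorb _ _ _
    have LB : A.m p w L = L :=
      calc A.m p w L = A.m L w p := A.m321 _ _ _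
        _ = A.m (A.m x w r) w p := by rw [hL]
        _ = A.m x (A.m w w p) (A.m r w p) := A.assoc _ _ _ _ _
        _ = A.m x w (A.m r w p) := by rw [A.idem]
        _ = A.m x w (A.m p w r) := by rw [A.m321 r w p]
        _ = A.m x w r := by rw [hrabs]
        _ = L := hL.symm
    have hxpr : A.m x p r = r :=
      calc A.m x p r = A.m x r p := A.comm₁ _ _ _
        _ = r := rx.symm
    have hxrL : A.m x r L = L := by
      rw [hL, A.comm₁ x w r]; exact A.absorb _ _ _
    have LC : A.m x p L = L :=
      calc A.m x p L = A.m L p x := A.m321 _ _ _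
        _ = A.m (A.m x w r) p x := by rw [hL]
        _ = A.m x (A.m w p x) (A.m r p x) := A.assoc _ _ _ _ _
        _ = A.m x (A.m x w p) (A.m r p x) := by rw [A.m312 w p x]
        _ = A.m x (A.m x w p) (A.m x r p) := by rw [A.m312 r p x]
        _ = A.m x (A.m x w p) r := by rw [← rx]
        _ = A.m (A.m x w p) x r := A.m213 _ _ _
        _ = A.m x (A.m w x r) (A.m p x r) := A.assoc _ _ _ _ _
        _ = A.m x (A.m x w r) (A.m x p r) := by rw [A.m213 w x r, A.m213 p x r]
        _ = A.m x L r := by rw [← hL, hxpr]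
        _ = A.m x r L := A.comm₁ _ _ _
        _ = L := hxrL
    have hwp : A.m w p L = L := by rw [A.m213 w p L]; exact LB
    have key : A.m x w p = L := A.med_eq x w p L LA.symm LC.symm hwp.symm
    have final : A.m h' w (A.m x w p) = A.m x w p :=
      calc A.m h' w (A.m x w p) = A.m (A.m x w p) w h' := A.m321 _ _ _
        _ = A.m x (A.m w w h') (A.m p w h') := A.assoc _ _ _ _ _
        _ = A.m x w (A.m p w h') := by rw [A.idem]
        _ = A.m x w r := by rw [← hr]
        _ = L := hL.symm
        _ = A.m x w p := key.symm
    show A.m x w (γ w) = A.m h' w (A.m x w (γ w))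
    rw [← hp]
    exact final.symm

lemma isGate_conv (γ : M → M) (h : A.IsGate γ) : A.Conv {w | γ w = w} := by
  obtain ⟨hfix, hrel⟩ := h
  intro a ha b hb z hz
  have hz' : z = A.m a b z := hz
  have g1 : γ z = A.m a z (γ z) := hrel z a ha
  have g2 : γ z = A.m b z (γ z) := hrel z b hb
  have h2 : z = A.m (γ z) b z := A.conv_aux a b z (γ z) hz' g1
  have h3 : γ z = A.m (γ z) b z :=
    calc γ z = A.m b z (γ z) := g2
      _ = A.m (γ z) b z := A.m312 _ _ _
  show γ z = z
  exact h3.trans h2.symm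


end MedianAlgebra

/-- The iterated gate map onto the convex hull of the points of `x :: L`. -/
def MedianAlgebra.gateL {M : Type*} (A : MedianAlgebra M) (x : M) (L : List M) (w : M) : M :=
  L.foldr (fun y g => A.m y w g) x

namespace MedianAlgebra

variable {M : Type*} (A : MedianAlgebra M)

lemma gateL_nil (x w : M) : A.gateL x [] w = x := rfl

lemma gateL_cons (x y w : M) (L : List M) :
    A.gateL x (y :: L) w = A.m y w (A.gateL x L w) := rfl

lemma gateL_isGate (x : M) (L : List M) : A.IsGate (A.gateL x L) := by
  induction L with
  | nil =>
      constructor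
      · intro w; rfl
      · intro w h hh
        show x = A.m h w x
        have hh' : x = h := hh
        rw [← hh']
        exact (A.mxyx x w).symm
  | cons y L ih =>
      have h := A.isGate_step y (A.gateL x L) ih
      have hfun : A.gateL x (y :: L) = fun w => A.m y w (A.gateL x L w) := rfl
      rw [hfun]
      exact h

lemma gateL_cons_fix (x y w : M) (L : List M) (h : A.gateL x L w = w) :
    A.gateL x (y :: L) w = w := by
  rw [gateL_cons, h]
  exact A.mxyy y w

lemma gateL_head_fix (x y : M) (L : List M) : A.gateL x (y :: L) y = y := by
  rw [gateL_cons]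
  exact A.idem _ _

lemma gateL_mem_fix (x z : M) (L : List M) (hz : z ∈ L) : A.gateL x L z = z := by
  induction L with
  | nil => cases hz
  | cons y L ih =>
      rcases List.mem_cons.mp hz with h | h
      · subst h; exact A.gateL_head_fix x z L
      · exact A.gateL_cons_fix x y z L (ih h)

lemma gateL_prepend (x w : M) (L : List M) (h : A.gateL x L w = w) :
    ∀ K : List M, A.gateL x (K ++ L) w = w := by
  intro K
  induction K with
  | nil => exact h
  | cons y K ih =>
      rw [List.cons_append]
      exact A.gateL_cons_fix x y w (K ++ L) ih

lemma gateL_append (x x₂ w : M) (K : List M) :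
    ∀ L : List M, A.gateL x L w = w → A.gateL x₂ (L ++ x :: K) w = w := by
  intro L
  induction L generalizing w with
  | nil =>
      intro h
      have h' : x = w := h
      subst h'
      exact A.gateL_head_fix x₂ x K
  | cons y L ih =>
      intro h
      rw [gateL_cons] at h
      have hpfix : A.gateL x L (A.gateL x L w) = A.gateL x L w :=
        (A.gateL_isGate x L).1 w
      have hp2 : A.gateL x₂ (L ++ x :: K) (A.gateL x L w) = A.gateL x L w :=
        ih (A.gateL x L w) hpfix
      have hg : A.gateL x₂ (L ++ x :: K) w
          = A.m (A.gateL x L w) w (A.gateL x₂ (L ++ x :: K) w) :=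
        (A.gateL_isGate x₂ (L ++ x :: K)).2 w (A.gateL x L w) hp2
      have hres := A.append_aux y w (A.gateL x L w) (A.gateL x₂ (L ++ x :: K) w) h.symm hg
      rw [List.cons_append, gateL_cons]
      exact hres.symm

lemma conv_hull (X : Set M) : A.Conv (A.hull X) := by
  intro a ha b hb z hz
  intro C hC
  exact hC.1 a (ha C hC) b (hb C hC) hz

lemma convIn_hullIn (N X : Set M) (hX : X ⊆ N) : A.ConvIn N (A.hullIn N X) := by
  have hNmem : A.ConvIn N N ∧ X ⊆ N :=
    ⟨⟨subset_rfl, fun x _ y _ => Set.inter_subset_left⟩, hX⟩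
  constructor
  · exact Set.sInter_subset_of_mem hNmem
  · intro a ha b hb w hw
    intro C hC
    exact hC.1.2 a (ha C hC) b (hb C hC) hw

lemma subset_hullIn (N X : Set M) : X ⊆ A.hullIn N X := by
  intro x hx C hC
  exact hC.2 hx

lemma gateL_mem_hullIn (N X : Set M)
    (hN : ∀ x ∈ N, ∀ y ∈ N, ∀ z ∈ N, A.m x y z ∈ N) (hX : X ⊆ N)
    (x z : M) (hx : x ∈ X) (hz : z ∈ N) :
    ∀ L : List M, (∀ y ∈ L, y ∈ X) → A.gateL x L z ∈ A.hullIn N X := by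
  intro L
  induction L with
  | nil =>
      intro _
      exact A.subset_hullIn N X hx
  | cons y L ih =>
      intro hL
      have hy : y ∈ X := hL y List.mem_cons_self
      have hp : A.gateL x L z ∈ A.hullIn N X := ih fun a ha => hL a (List.mem_cons_of_mem y ha)
      have hCI := A.convIn_hullIn N X hX
      have hpN : A.gateL x L z ∈ N := hCI.1 hp
      have hyH : y ∈ A.hullIn N X := A.subset_hullIn N X hy
      rw [gateL_cons]
      apply hCI.2 y hyH (A.gateL x L z) hp
      constructor
      · exact hN y (hX hy) z hz (A.gateL x L z) hpN
      · show A.m y z (A.gateL x L z) = A.m y (A.gateL x L z) (A.m y z (A.gateL x L z))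
        conv_rhs => rw [A.comm₁ y z (A.gateL x L z)]
        rw [A.absorb, A.comm₁]

end MedianAlgebra

theorem hullIn_eq_inter_hull {M : Type*} (A : MedianAlgebra M) (N X : Set M)
    (hN : ∀ x ∈ N, ∀ y ∈ N, ∀ z ∈ N, A.m x y z ∈ N) (hX : X ⊆ N) :
    A.hullIn N X = N ∩ A.hull X := by
  apply Set.Subset.antisymm
  · -- easy direction: `N ∩ hull X` is convex in `N` and contains `X`
    apply Set.sInter_subset_of_mem
    refine ⟨⟨Set.inter_subset_left, ?_⟩, ?_⟩
    · intro a ha b hb w hw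
      exact ⟨hw.1, A.conv_hull X a ha.2 b hb.2 hw.2⟩
    · intro x hx
      exact ⟨hX hx, fun C hC => hC.2 hx⟩
  · rintro z ⟨hzN, hzH⟩
    have hDconv : A.Conv {w : M | ∃ x L, x ∈ X ∧ (∀ y ∈ L, y ∈ X) ∧ A.gateL x L w = w} := by
      rintro u ⟨x₁, L₁, hx₁, hL₁, hu⟩ v ⟨x₂, L₂, hx₂, hL₂, hv⟩ w hw
      have hu' : A.gateL x₂ (L₁ ++ x₁ :: L₂) u = u := A.gateL_append x₁ x₂ u L₂ L₁ hu
      have hv' : A.gateL x₂ (L₁ ++ x₁ :: L₂) v = v := by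
        have h := A.gateL_prepend x₂ v L₂ hv (L₁ ++ [x₁])
        rwa [List.append_assoc, List.singleton_append] at h
      have hconv := A.isGate_conv (A.gateL x₂ (L₁ ++ x₁ :: L₂)) (A.gateL_isGate x₂ _)
      have hwfix : A.gateL x₂ (L₁ ++ x₁ :: L₂) w = w := hconv u hu' v hv' hw
      refine ⟨x₂, L₁ ++ x₁ :: L₂, hx₂, ?_, hwfix⟩
      intro y hy
      rcases List.mem_append.mp hy with h | h
      · exact hL₁ y h
      · rcases List.mem_cons.mp h with h' | h'
        · subst h'; exact hx₁
        · exact hL₂ y h'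
    have hXD : X ⊆ {w : M | ∃ x L, x ∈ X ∧ (∀ y ∈ L, y ∈ X) ∧ A.gateL x L w = w} := by
      intro x hx
      exact ⟨x, [], hx, by simp, rfl⟩
    have hzD := hzH _ ⟨hDconv, hXD⟩
    obtain ⟨x, L, hx, hL, hfix⟩ := hzD
    rw [← hfix]
    exact A.gateL_mem_hullIn N X hN hX x z hx hzN L hL
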